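/- Under the stated hypotheses, suppose I + R_x is invertible for all x > 0, and define Φ(t) = C(exp(−tA)·b) and T(x,y) = −C(exp(−xA)·(I + R_x)⁻¹·exp(−yA)·b). Then T solves the Gelfand–Levitan equation: for all 0 < x < y, Φ(x+y) + T(x,y) + ∫_x^∞ T(x,z)·Φ(z+y) dz = 0. -/

import Mathlib

open MeasureTheory

/-- The semigroup `exp(-tA)` generated by a bounded operator `A`. -/
noncomputable def expA {H : Type*} [NormedAddCommGroup H] [InnerProductSpace ℂ H]
    [CompleteSpace H] (A : H →L[ℂ] H) (t : ℝ) : H →L[ℂ] H :=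
  NormedSpace.exp ((-(t : ℂ)) • A)

/-- `R_x = ∫_x^∞ exp(-tA)·BC·exp(-tA) dt` as a Bochner integral. -/
noncomputable def Rop {H : Type*} [NormedAddCommGroup H] [InnerProductSpace ℂ H]
    [CompleteSpace H] (A : H →L[ℂ] H) (BC : H →L[ℂ] H) (x : ℝ) : H →L[ℂ] H :=
  ∫ t in Set.Ioi x, expA A t * BC * expA A t

lemma expA_add {H : Type*} [NormedAddCommGroup H] [InnerProductSpace ℂ H]
    [CompleteSpace H] (A : H →L[ℂ] H) (s t : ℝ) :
    expA A (s + t) = expA A s * expA A t := by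
  letI : NormedAlgebra ℚ (H →L[ℂ] H) := .restrictScalars ℚ ℂ _
  unfold expA
  have h : (-((s + t : ℝ) : ℂ)) • A = (-(s : ℂ)) • A + (-(t : ℂ)) • A := by
    rw [← add_smul]; push_cast; ring_nf
  rw [h]
  exact NormedSpace.exp_add_of_commute (((Commute.refl A).smul_left _).smul_right _)

lemma expA_continuous {H : Type*} [NormedAddCommGroup H] [InnerProductSpace ℂ H]
    [CompleteSpace H] (A : H →L[ℂ] H) : Continuous (expA A) := by
  letI : NormedAlgebra ℚ (H →L[ℂ] H) := .restrictScalars ℚ ℂ _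
  exact NormedSpace.exp_continuous.comp
    ((Complex.continuous_ofReal.neg).smul continuous_const)

lemma integrable_g {H : Type*} [NormedAddCommGroup H] [InnerProductSpace ℂ H]
    [CompleteSpace H] (A : H →L[ℂ] H) (B : H →L[ℂ] H) {M ε : ℝ} (hM : 0 < M) (hε : 0 < ε)
    (hdecay : ∀ t : ℝ, 0 ≤ t → ‖expA A t‖ ≤ M * Real.exp (-ε * t))
    {x : ℝ} (hx : 0 < x) :
    IntegrableOn (fun z => expA A z * B * expA A z) (Set.Ioi x) := by
  haveI : SecondCountableTopologyEither ℝ (H →L[ℂ] H) :=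
    secondCountableTopologyEither_of_left ℝ _
  have hcont : Continuous (fun z => expA A z * B * expA A z) :=
    ((expA_continuous A).mul continuous_const).mul (expA_continuous A)
  apply Integrable.mono' (g := fun z => (M * M * ‖B‖) * Real.exp (-(2 * ε) * z))
  · exact (exp_neg_integrableOn_Ioi x (by positivity)).const_mul _
  · exact hcont.aestronglyMeasurable
  · filter_upwards [ae_restrict_mem measurableSet_Ioi] with z hz
    have hz0 : (0 : ℝ) ≤ z := (hx.trans hz).le
    have h1 := hdecay z hz0
    have h0 : (0 : ℝ) ≤ M * Real.exp (-ε * z) := by positivity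
    calc ‖expA A z * B * expA A z‖ ≤ ‖expA A z * B‖ * ‖expA A z‖ := norm_mul_le _ _
      _ ≤ ‖expA A z‖ * ‖B‖ * ‖expA A z‖ :=
          mul_le_mul_of_nonneg_right (norm_mul_le _ _) (norm_nonneg _)
      _ ≤ (M * Real.exp (-ε * z)) * ‖B‖ * (M * Real.exp (-ε * z)) := by
          apply mul_le_mul (mul_le_mul_of_nonneg_right h1 (norm_nonneg _)) h1
            (norm_nonneg _) (by positivity)
      _ = (M * M * ‖B‖) * (Real.exp (-ε * z) * Real.exp (-ε * z)) := by ring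
      _ = (M * M * ‖B‖) * Real.exp (-(2 * ε) * z) := by
          rw [← Real.exp_add]; ring_nf

theorem gelfand_levitan
    {H : Type*} [NormedAddCommGroup H] [InnerProductSpace ℂ H] [CompleteSpace H]
    (A : H →L[ℂ] H) (b : H) (C : H →L[ℂ] ℂ)
    (M ε : ℝ) (hM : 0 < M) (hε : 0 < ε)
    (hdecay : ∀ t : ℝ, 0 ≤ t → ‖expA A t‖ ≤ M * Real.exp (-ε * t))
    (hinv : ∀ x : ℝ, 0 < x → IsUnit (1 + Rop A (C.smulRight b) x))
    (Φ : ℝ → ℂ) (hΦ : ∀ t : ℝ, Φ t = C (expA A t b))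
    (T : ℝ → ℝ → ℂ)
    (hT : ∀ x y : ℝ, T x y =
      -(C ((expA A x * Ring.inverse (1 + Rop A (C.smulRight b) x) * expA A y) b))) :
    ∀ x y : ℝ, 0 < x → x < y →
      Φ (x + y) + T x y + ∫ z in Set.Ioi x, T x z * Φ (z + y) = 0 := by
  intro x y hx hxy
  set B := C.smulRight b with hB
  set G := Ring.inverse (1 + Rop A B x) with hGdef
  set v := expA A y b with hv
  have hg : IntegrableOn (fun z => expA A z * B * expA A z) (Set.Ioi x) :=
    integrable_g A B hM hε hdecay hx
  have hgv : IntegrableOn (fun z => (expA A z * B * expA A z) v) (Set.Ioi x) :=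
    (ContinuousLinearMap.apply ℂ H v).integrable_comp hg
  -- pointwise identity for the integrand
  have hpt : ∀ z : ℝ, T x z * Φ (z + y) =
      -(C ((expA A x * G) ((expA A z * B * expA A z) v))) := by
    intro z
    rw [hT, hΦ, expA_add]
    simp only [hB, hv, ContinuousLinearMap.mul_apply, ContinuousLinearMap.smulRight_apply,
      _root_.map_smul, smul_eq_mul]
    ring
  have hint : (∫ z in Set.Ioi x, T x z * Φ (z + y)) =
      -(C ((expA A x * G) (Rop A B x v))) := by
    calc (∫ z in Set.Ioi x, T x z * Φ (z + y))
        = ∫ z in Set.Ioi x, -((C.comp (expA A x * G)) ((expA A z * B * expA A z) v)) := by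
          simp_rw [hpt]; rfl
      _ = -((C.comp (expA A x * G)) (∫ z in Set.Ioi x, (expA A z * B * expA A z) v)) := by
          rw [integral_neg, (C.comp (expA A x * G)).integral_comp_comm hgv]
      _ = -(C ((expA A x * G) ((∫ z in Set.Ioi x, expA A z * B * expA A z) v))) := by
          rw [ContinuousLinearMap.integral_apply hg]; rfl
      _ = -(C ((expA A x * G) (Rop A B x v))) := rfl
  rw [hint, hT, hΦ, expA_add]
  have h1 : G * (1 + Rop A B x) = 1 := Ring.inverse_mul_cancel _ (hinv x hx)
  have h2 : G + G * Rop A B x = 1 := by rw [mul_add, mul_one] at h1; exact h1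
  have hop : expA A x * expA A y =
      expA A x * G * expA A y + expA A x * G * Rop A B x * expA A y := by
    calc expA A x * expA A y = expA A x * (G + G * Rop A B x) * expA A y := by
          rw [h2, mul_one]
      _ = _ := by noncomm_ring
  rw [hop]
  simp only [hB, hv, ContinuousLinearMap.add_apply, ContinuousLinearMap.mul_apply, map_add]
  ring
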